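/- Suppose p reducers are given q₁,…,q_p binary strings of length b respectively, with each qᵢ ≤ q and q ≥ 2, and every pair of strings at Hamming distance 1 appears together in at least one reducer's input set. Then (q₁ + ⋯ + q_p)/2^b ≥ b/log₂(q). -/

import Mathlib

open Finset


lemma le_logb_one_add {x : ℝ} (hx0 : 0 ≤ x) (hx1 : x ≤ 1) : x ≤ Real.logb 2 (1 + x) := by
  have key : Real.exp (x * Real.log 2) ≤ 1 + x := by
    have h := convexOn_exp.2 (Set.mem_univ 0) (Set.mem_univ (Real.log 2))
      (by linarith : (0:ℝ) ≤ 1 - x) hx0 (by ring)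
    simp only [smul_eq_mul, mul_zero, zero_add, Real.exp_zero, Real.exp_log two_pos] at h
    calc Real.exp (x * Real.log 2) ≤ (1-x) * 1 + x * 2 := h
    _ = 1 + x := by ring
  have hlog : x * Real.log 2 ≤ Real.log (1 + x) := by
    have := Real.log_le_log (Real.exp_pos _) key
    rwa [Real.log_exp] at this
  rw [Real.logb, le_div_iff₀ (Real.log_pos one_lt_two)]
  linarith

lemma merge_ineq (a c : ℕ) (hca : c ≤ a) :
    (a:ℝ) * Real.logb 2 a + c * Real.logb 2 c + 2*c ≤ ((a:ℝ)+c) * Real.logb 2 ((a:ℝ)+c) := by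
  rcases Nat.eq_zero_or_pos c with hc | hc
  · subst hc; simp
  have ha : 0 < a := lt_of_lt_of_le hc hca
  have haR : (0:ℝ) < a := by exact_mod_cast ha
  have hcR : (0:ℝ) < c := by exact_mod_cast hc
  have hcaR : (c:ℝ) ≤ a := by exact_mod_cast hca
  -- c * logb (a+c) ≥ c * logb (2c) = c * (1 + logb c)
  have h1 : (c:ℝ) * (1 + Real.logb 2 c) ≤ c * Real.logb 2 ((a:ℝ)+c) := by
    have : Real.logb 2 (2*c) ≤ Real.logb 2 ((a:ℝ)+c) := by
      rw [Real.logb_le_logb one_lt_two (by linarith) (by linarith)]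
      linarith
    rw [Real.logb_mul (by norm_num) (ne_of_gt hcR)] at this
    rw [show Real.logb 2 2 = 1 from Real.logb_self_eq_one one_lt_two] at this
    nlinarith
  -- a * logb (a+c) = a * logb a + a * logb (1 + c/a) ≥ a * logb a + c
  have h2 : (a:ℝ) * Real.logb 2 a + c ≤ a * Real.logb 2 ((a:ℝ)+c) := by
    have hx := le_logb_one_add (x := (c:ℝ)/a) (by positivity) (by rw [div_le_one haR]; linarith)
    have heq : (1 : ℝ) + (c:ℝ)/a = ((a:ℝ)+c)/a := by field_simp
    rw [heq, Real.logb_div (by linarith) (ne_of_gt haR)] at hx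
    have := mul_le_mul_of_nonneg_left hx (le_of_lt haR)
    rw [mul_sub] at this
    have hca' : (c:ℝ) ≤ a * ((c:ℝ)/a) := by field_simp; exact le_refl _
    nlinarith
  push_cast
  nlinarith


def epairs {n : ℕ} (S : Finset (Fin n → Bool)) : Finset ((Fin n → Bool) × (Fin n → Bool)) :=
  (S ×ˢ S).filter fun p => hammingDist p.1 p.2 = 1

lemma hammingDist_cons {n : ℕ} (x y : Bool) (u v : Fin n → Bool) :
    hammingDist (Fin.cons x u : Fin (n+1) → Bool) (Fin.cons y v) = (if x = y then 0 else 1) + hammingDist u v := by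
  simp only [hammingDist, Finset.card_filter, Fin.sum_univ_succ, Fin.cons_zero, Fin.cons_succ]
  by_cases h : x = y <;> simp [h]

lemma hammingDist_head_eq {n : ℕ} (s t : Fin (n+1) → Bool) (h : s 0 = t 0) :
    hammingDist (Fin.tail s) (Fin.tail t) = hammingDist s t := by
  conv_rhs => rw [← Fin.cons_self_tail s, ← Fin.cons_self_tail t]
  rw [hammingDist_cons, if_pos h, zero_add]

lemma hammingDist_head_ne {n : ℕ} (s t : Fin (n+1) → Bool) (h : s 0 ≠ t 0) :
    hammingDist s t = 1 + hammingDist (Fin.tail s) (Fin.tail t) := by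
  conv_lhs => rw [← Fin.cons_self_tail s, ← Fin.cons_self_tail t]
  rw [hammingDist_cons, if_neg h]

lemma epairs_split {n : ℕ} (S : Finset (Fin (n+1) → Bool)) :
    ∃ A B : Finset (Fin n → Bool),
      S.card = A.card + B.card ∧
      (epairs S).card = (epairs A).card + (epairs B).card + 2 * (A ∩ B).card := by
  classical
  set A : Finset (Fin n → Bool) := (S.filter fun s => s 0 = false).image Fin.tail with hA
  set B : Finset (Fin n → Bool) := (S.filter fun s => s 0 = true).image Fin.tail with hB
  have memA : ∀ u, u ∈ A ↔ (Fin.cons false u : Fin (n+1) → Bool) ∈ S := by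
    intro u; constructor
    · intro hu
      simp only [hA, mem_image, mem_filter] at hu
      obtain ⟨s, ⟨hs, h0⟩, rfl⟩ := hu
      rwa [← h0, Fin.cons_self_tail]
    · intro h
      exact mem_image.mpr ⟨_, mem_filter.mpr ⟨h, Fin.cons_zero _ _⟩, Fin.tail_cons _ _⟩
  have memB : ∀ u, u ∈ B ↔ (Fin.cons true u : Fin (n+1) → Bool) ∈ S := by
    intro u; constructor
    · intro hu
      simp only [hB, mem_image, mem_filter] at hu
      obtain ⟨s, ⟨hs, h0⟩, rfl⟩ := hu
      rwa [← h0, Fin.cons_self_tail]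
    · intro h
      exact mem_image.mpr ⟨_, mem_filter.mpr ⟨h, Fin.cons_zero _ _⟩, Fin.tail_cons _ _⟩
  refine ⟨A, B, ?_, ?_⟩
  · -- card split
    have hcA : A.card = (S.filter fun s => s 0 = false).card := by
      apply Finset.card_image_of_injOn
      intro s hs t ht hst
      simp only [mem_coe, mem_filter] at hs ht
      rw [← Fin.cons_self_tail s, ← Fin.cons_self_tail t, hs.2, ht.2, hst]
    have hcB : B.card = (S.filter fun s => s 0 = true).card := by
      apply Finset.card_image_of_injOn
      intro s hs t ht hst
      simp only [mem_coe, mem_filter] at hs ht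
      rw [← Fin.cons_self_tail s, ← Fin.cons_self_tail t, hs.2, ht.2, hst]
    rw [hcA, hcB]
    have e1 : S.filter (fun s => ¬ s 0 = false) = S.filter (fun s => s 0 = true) := by
      apply Finset.filter_congr; intro s _; simp
    rw [← Finset.card_filter_add_card_filter_not (p := fun s => s 0 = false), e1]
  · -- edge split
    set T := epairs S with hT
    have split1 : T.card = (T.filter fun p => p.1 0 = false).card + (T.filter fun p => p.1 0 = true).card := by
      have e1 : T.filter (fun p => ¬ p.1 0 = false) = T.filter (fun p => p.1 0 = true) := by
        apply Finset.filter_congr; intro p _; simp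
      rw [← Finset.card_filter_add_card_filter_not (p := fun p => p.1 0 = false), e1]
    have split2 : ∀ (P : ((Fin (n+1) → Bool) × (Fin (n+1) → Bool)) → Prop) [DecidablePred P],
        (T.filter P).card = (T.filter fun p => P p ∧ p.2 0 = false).card + (T.filter fun p => P p ∧ p.2 0 = true).card := by
      intro P _
      rw [← Finset.card_filter_add_card_filter_not (p := fun p => p.2 0 = false), Finset.filter_filter, Finset.filter_filter]
      have e1 : T.filter (fun p => P p ∧ ¬ p.2 0 = false) = T.filter (fun p => P p ∧ p.2 0 = true) := by
        apply Finset.filter_congr; intro p _; simp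
      rw [e1]
    have hff : (T.filter fun p => p.1 0 = false ∧ p.2 0 = false).card = (epairs A).card := by
      apply Finset.card_bij (fun (p : (Fin (n+1) → Bool) × (Fin (n+1) → Bool)) _ => ((Fin.tail p.1 : Fin n → Bool), (Fin.tail p.2 : Fin n → Bool)))
      · rintro ⟨s, t⟩ hp
        simp only [hT, epairs, mem_filter, mem_product] at hp
        obtain ⟨⟨⟨hs, ht⟩, hd⟩, h0s, h0t⟩ := hp
        simp only [epairs, mem_filter, mem_product]
        refine ⟨⟨?_, ?_⟩, ?_⟩
        · rw [memA]; rwa [show (false : Bool) = s 0 from h0s.symm, Fin.cons_self_tail]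
        · rw [memA]; rwa [show (false : Bool) = t 0 from h0t.symm, Fin.cons_self_tail]
        · rw [hammingDist_head_eq s t (h0s.trans h0t.symm)]; exact hd
      · rintro ⟨s, t⟩ hp ⟨s', t'⟩ hp' h
        simp only [hT, epairs, mem_filter, mem_product] at hp hp'
        obtain ⟨-, h0s, h0t⟩ := hp
        obtain ⟨-, h0s', h0t'⟩ := hp'
        simp only [Prod.mk.injEq] at h
        have : s = s' := by
          rw [← Fin.cons_self_tail s, ← Fin.cons_self_tail s', h0s, h0s', h.1]
        have ht : t = t' := by
          rw [← Fin.cons_self_tail t, ← Fin.cons_self_tail t', h0t, h0t', h.2]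
        simp [this, ht]
      · rintro ⟨u, v⟩ huv
        simp only [epairs, mem_filter, mem_product] at huv
        obtain ⟨⟨hu, hv⟩, hd⟩ := huv
        refine ⟨(Fin.cons false u, Fin.cons false v), ?_, by simp [Fin.tail_cons]⟩
        simp only [hT, epairs, mem_filter, mem_product]
        exact ⟨⟨⟨(memA u).mp hu, (memA v).mp hv⟩, by rw [hammingDist_cons]; simpa⟩, by simp, by simp⟩
    have htt : (T.filter fun p => p.1 0 = true ∧ p.2 0 = true).card = (epairs B).card := by
      apply Finset.card_bij (fun (p : (Fin (n+1) → Bool) × (Fin (n+1) → Bool)) _ => ((Fin.tail p.1 : Fin n → Bool), (Fin.tail p.2 : Fin n → Bool)))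
      · rintro ⟨s, t⟩ hp
        simp only [hT, epairs, mem_filter, mem_product] at hp
        obtain ⟨⟨⟨hs, ht⟩, hd⟩, h0s, h0t⟩ := hp
        simp only [epairs, mem_filter, mem_product]
        refine ⟨⟨?_, ?_⟩, ?_⟩
        · rw [memB]; rwa [show (true : Bool) = s 0 from h0s.symm, Fin.cons_self_tail]
        · rw [memB]; rwa [show (true : Bool) = t 0 from h0t.symm, Fin.cons_self_tail]
        · rw [hammingDist_head_eq s t (h0s.trans h0t.symm)]; exact hd
      · rintro ⟨s, t⟩ hp ⟨s', t'⟩ hp' h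
        simp only [hT, epairs, mem_filter, mem_product] at hp hp'
        obtain ⟨-, h0s, h0t⟩ := hp
        obtain ⟨-, h0s', h0t'⟩ := hp'
        simp only [Prod.mk.injEq] at h
        have : s = s' := by
          rw [← Fin.cons_self_tail s, ← Fin.cons_self_tail s', h0s, h0s', h.1]
        have ht : t = t' := by
          rw [← Fin.cons_self_tail t, ← Fin.cons_self_tail t', h0t, h0t', h.2]
        simp [this, ht]
      · rintro ⟨u, v⟩ huv
        simp only [epairs, mem_filter, mem_product] at huv
        obtain ⟨⟨hu, hv⟩, hd⟩ := huv
        refine ⟨(Fin.cons true u, Fin.cons true v), ?_, by simp [Fin.tail_cons]⟩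
        simp only [hT, epairs, mem_filter, mem_product]
        exact ⟨⟨⟨(memB u).mp hu, (memB v).mp hv⟩, by rw [hammingDist_cons]; simpa⟩, by simp, by simp⟩
    have hft : (T.filter fun p => p.1 0 = false ∧ p.2 0 = true).card = (A ∩ B).card := by
      apply Finset.card_bij (fun (p : (Fin (n+1) → Bool) × (Fin (n+1) → Bool)) _ => (Fin.tail p.1 : Fin n → Bool))
      · rintro ⟨s, t⟩ hp
        simp only [hT, epairs, mem_filter, mem_product] at hp
        obtain ⟨⟨⟨hs, ht⟩, hd⟩, h0s, h0t⟩ := hp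
        have hne : s 0 ≠ t 0 := by rw [h0s, h0t]; simp
        have htail : Fin.tail s = Fin.tail t := by
          have := hammingDist_head_ne s t hne
          rw [hd] at this
          have h0 : hammingDist (Fin.tail s) (Fin.tail t) = 0 := by omega
          exact hammingDist_eq_zero.mp h0
        rw [mem_inter]
        constructor
        · rw [memA]; rwa [show (false : Bool) = s 0 from h0s.symm, Fin.cons_self_tail]
        · rw [memB, htail]; rwa [show (true : Bool) = t 0 from h0t.symm, Fin.cons_self_tail]
      · rintro ⟨s, t⟩ hp ⟨s', t'⟩ hp' h
        simp only [hT, epairs, mem_filter, mem_product] at hp hp'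
        obtain ⟨⟨-, hd⟩, h0s, h0t⟩ := hp
        obtain ⟨⟨-, hd'⟩, h0s', h0t'⟩ := hp'
        have hne : s 0 ≠ t 0 := by rw [h0s, h0t]; simp
        have hne' : s' 0 ≠ t' 0 := by rw [h0s', h0t']; simp
        have htail : Fin.tail s = Fin.tail t := by
          have := hammingDist_head_ne s t hne
          rw [hd] at this
          exact hammingDist_eq_zero.mp (by omega)
        have htail' : Fin.tail s' = Fin.tail t' := by
          have := hammingDist_head_ne s' t' hne'
          rw [hd'] at this
          exact hammingDist_eq_zero.mp (by omega)
        have hs : s = s' := by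
          rw [← Fin.cons_self_tail s, ← Fin.cons_self_tail s', h0s, h0s', h]
        have ht : t = t' := by
          rw [← Fin.cons_self_tail t, ← Fin.cons_self_tail t', h0t, h0t', ← htail, ← htail', h]
        simp [hs, ht]
      · intro u hu
        rw [mem_inter] at hu
        refine ⟨(Fin.cons false u, Fin.cons true u), ?_, Fin.tail_cons _ _⟩
        simp only [hT, epairs, mem_filter, mem_product]
        refine ⟨⟨⟨(memA u).mp hu.1, (memB u).mp hu.2⟩, ?_⟩, by simp, by simp⟩
        rw [hammingDist_cons]; simp
    have htf : (T.filter fun p => p.1 0 = true ∧ p.2 0 = false).card = (A ∩ B).card := by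
      apply Finset.card_bij (fun (p : (Fin (n+1) → Bool) × (Fin (n+1) → Bool)) _ => (Fin.tail p.2 : Fin n → Bool))
      · rintro ⟨s, t⟩ hp
        simp only [hT, epairs, mem_filter, mem_product] at hp
        obtain ⟨⟨⟨hs, ht⟩, hd⟩, h0s, h0t⟩ := hp
        have hne : s 0 ≠ t 0 := by rw [h0s, h0t]; simp
        have htail : Fin.tail s = Fin.tail t := by
          have := hammingDist_head_ne s t hne
          rw [hd] at this
          exact hammingDist_eq_zero.mp (by omega)
        rw [mem_inter]
        constructor
        · rw [memA]; rwa [show (false : Bool) = t 0 from h0t.symm, Fin.cons_self_tail]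
        · rw [memB, ← htail]; rwa [show (true : Bool) = s 0 from h0s.symm, Fin.cons_self_tail]
      · rintro ⟨s, t⟩ hp ⟨s', t'⟩ hp' h
        simp only [hT, epairs, mem_filter, mem_product] at hp hp'
        obtain ⟨⟨-, hd⟩, h0s, h0t⟩ := hp
        obtain ⟨⟨-, hd'⟩, h0s', h0t'⟩ := hp'
        have hne : s 0 ≠ t 0 := by rw [h0s, h0t]; simp
        have hne' : s' 0 ≠ t' 0 := by rw [h0s', h0t']; simp
        have htail : Fin.tail s = Fin.tail t := by
          have := hammingDist_head_ne s t hne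
          rw [hd] at this
          exact hammingDist_eq_zero.mp (by omega)
        have htail' : Fin.tail s' = Fin.tail t' := by
          have := hammingDist_head_ne s' t' hne'
          rw [hd'] at this
          exact hammingDist_eq_zero.mp (by omega)
        have ht : t = t' := by
          rw [← Fin.cons_self_tail t, ← Fin.cons_self_tail t', h0t, h0t', h]
        have hs : s = s' := by
          rw [← Fin.cons_self_tail s, ← Fin.cons_self_tail s', h0s, h0s', htail, htail', h]
        simp [hs, ht]
      · intro u hu
        rw [mem_inter] at hu
        refine ⟨(Fin.cons true u, Fin.cons false u), ?_, Fin.tail_cons _ _⟩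
        simp only [hT, epairs, mem_filter, mem_product]
        refine ⟨⟨⟨(memB u).mp hu.2, (memA u).mp hu.1⟩, ?_⟩, by simp, by simp⟩
        rw [hammingDist_cons]; simp
    rw [split1, split2 (fun p => p.1 0 = false), split2 (fun p => p.1 0 = true)]
    rw [hff, htt, hft, htf]
    ring


lemma merge_ineq_min (a c : ℕ) :
    (a:ℝ) * Real.logb 2 a + (c:ℝ) * Real.logb 2 c + 2 * ((min a c : ℕ) : ℝ)
      ≤ ((a:ℝ)+(c:ℝ)) * Real.logb 2 ((a:ℝ)+(c:ℝ)) := by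
  rcases le_total c a with h | h
  · rw [min_eq_right h]
    exact merge_ineq a c h
  · rw [min_eq_left h]
    have := merge_ineq c a h
    rw [show (c:ℝ)+(a:ℝ) = (a:ℝ)+(c:ℝ) from add_comm _ _] at this
    linarith

lemma epairs_card_bound : ∀ (n : ℕ) (S : Finset (Fin n → Bool)),
    ((epairs S).card : ℝ) ≤ (S.card : ℝ) * Real.logb 2 (S.card : ℝ) := by
  intro n
  induction n with
  | zero =>
    intro S
    have he : epairs S = ∅ := by
      ext p
      simp only [epairs, mem_filter, mem_product, notMem_empty, iff_false, not_and]
      intro _ h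
      have := hammingDist_le_card_fintype (x := p.1) (y := p.2)
      rw [Fintype.card_fin] at this
      omega
    rw [he]
    simp only [card_empty, Nat.cast_zero]
    rcases Nat.eq_zero_or_pos S.card with h | h
    · simp [h]
    · exact mul_nonneg (Nat.cast_nonneg _) (Real.logb_nonneg one_lt_two (by exact_mod_cast h))
  | succ n ih =>
    intro S
    obtain ⟨A, B, hcard, hedge⟩ := epairs_split S
    have hAB1 : (A ∩ B).card ≤ min A.card B.card :=
      le_min (card_le_card inter_subset_left) (card_le_card inter_subset_right)
    have h1 := ih A
    have h2 := ih B
    have hm := merge_ineq_min A.card B.card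
    rw [hedge, hcard]
    have hc : ((A ∩ B).card : ℝ) ≤ ((min A.card B.card : ℕ) : ℝ) := by exact_mod_cast hAB1
    push_cast
    push_cast at hm hc
    linarith

lemma neighbor_count {n : ℕ} (u : Fin n → Bool) :
    (Finset.univ.filter fun v => hammingDist u v = 1).card = n := by
  have : (Finset.univ : Finset (Fin n)).card
      = (Finset.univ.filter fun v => hammingDist u v = 1).card := by
    apply Finset.card_bij (fun i _ => Function.update u i (!u i))
    · intro i _
      simp only [mem_filter, mem_univ, true_and]
      have : (Finset.univ.filter fun j => u j ≠ Function.update u i (!u i) j) = {i} := by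
        ext j
        rcases eq_or_ne j i with rfl | hj
        · simp [Function.update_self]
        · simp [Function.update_of_ne hj, hj]
      simp only [hammingDist, this, card_singleton]
    · intro i _ j _ hij
      by_contra hne
      have h1 := congrFun hij i
      rw [Function.update_self, Function.update_of_ne hne] at h1
      exact (Bool.not_ne_self (u i)) h1
    · intro v hv
      simp only [mem_filter, mem_univ, true_and, hammingDist] at hv
      obtain ⟨i, hi⟩ := Finset.card_eq_one.mp hv
      refine ⟨i, mem_univ i, ?_⟩
      funext j
      rcases eq_or_ne j i with rfl | hj
      · have : j ∈ (Finset.univ.filter fun k => u k ≠ v k) := by rw [hi]; exact mem_singleton_self j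
        simp only [mem_filter] at this
        rw [Function.update_self]
        revert this; cases u j <;> cases v j <;> simp
      · have : j ∉ (Finset.univ.filter fun k => u k ≠ v k) := by rw [hi]; simp [hj]
        simp only [mem_filter, mem_univ, true_and, not_not] at this
        rw [Function.update_of_ne hj, this]
  rw [← this, card_univ, Fintype.card_fin]

/-- Lower bound on replication rate for the Hamming-distance-1 problem:
if `p` reducers receive at most `q` strings each (`q ≥ 2`) and every pair of
`b`-bit strings at Hamming distance 1 shares some reducer, then the
replication rate `(Σᵢ qᵢ)/2^b` is at least `b / log₂ q`. -/
theorem hamming_distance_one_replication_lower_bound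
    (b p q : ℕ) (hq : 2 ≤ q)
    (R : Fin p → Finset (Fin b → Bool))
    (hsize : ∀ i, (R i).card ≤ q)
    (hcover : ∀ u v : Fin b → Bool, hammingDist u v = 1 →
      ∃ i, u ∈ R i ∧ v ∈ R i) :
    (∑ i, ((R i).card : ℝ)) / 2 ^ b ≥ (b : ℝ) / Real.logb 2 q := by
  classical
  have hq1 : (1:ℝ) < q := by exact_mod_cast hq
  have hL : 0 < Real.logb 2 q := Real.logb_pos one_lt_two hq1
  have h2b : (0:ℝ) < 2 ^ b := by positivity
  rw [ge_iff_le, div_le_div_iff₀ hL h2b]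
  have htotal : ((Finset.univ ×ˢ Finset.univ).filter
      fun p : (Fin b → Bool) × (Fin b → Bool) => hammingDist p.1 p.2 = 1).card = 2 ^ b * b := by
    rw [Finset.card_filter, Finset.sum_product]
    have hnb : ∀ u : Fin b → Bool,
        (∑ v : Fin b → Bool, if hammingDist u v = 1 then 1 else 0) = b := by
      intro u
      rw [← Finset.card_filter]
      exact neighbor_count u
    rw [Finset.sum_congr rfl (fun u _ => hnb u)]
    simp [Finset.card_univ]
  have hsub : ((Finset.univ ×ˢ Finset.univ).filter
      fun p : (Fin b → Bool) × (Fin b → Bool) => hammingDist p.1 p.2 = 1)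
      ⊆ Finset.univ.biUnion (fun i => epairs (R i)) := by
    intro x hx
    simp only [mem_filter, mem_product, mem_univ, true_and] at hx
    obtain ⟨i, h1, h2⟩ := hcover x.1 x.2 hx
    exact Finset.mem_biUnion.mpr ⟨i, mem_univ i, by
      simp only [epairs, mem_filter, mem_product]; exact ⟨⟨h1, h2⟩, hx⟩⟩
  have hcount : 2 ^ b * b ≤ ∑ i, (epairs (R i)).card := by
    calc 2 ^ b * b = _ := htotal.symm
    _ ≤ (Finset.univ.biUnion fun i => epairs (R i)).card := card_le_card hsub
    _ ≤ ∑ i, (epairs (R i)).card := card_biUnion_le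
  have hstep : ∀ i, ((epairs (R i)).card : ℝ) ≤ ((R i).card : ℝ) * Real.logb 2 q := by
    intro i
    refine (epairs_card_bound b (R i)).trans ?_
    apply mul_le_mul_of_nonneg_left ?_ (Nat.cast_nonneg _)
    rcases Nat.eq_zero_or_pos (R i).card with h | h
    · simp only [h, Nat.cast_zero, Real.logb_zero]
      exact hL.le
    · rw [Real.logb_le_logb one_lt_two (by exact_mod_cast h) (by linarith)]
      exact_mod_cast hsize i
  calc (b:ℝ) * 2 ^ b = ((2 ^ b * b : ℕ) : ℝ) := by push_cast; ring
  _ ≤ ((∑ i, (epairs (R i)).card : ℕ) : ℝ) := by exact_mod_cast hcount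
  _ = ∑ i, ((epairs (R i)).card : ℝ) := by push_cast; rfl
  _ ≤ ∑ i, ((R i).card : ℝ) * Real.logb 2 q := Finset.sum_le_sum (fun i _ => hstep i)
  _ = (∑ i, ((R i).card : ℝ)) * Real.logb 2 q := by rw [Finset.sum_mul]
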